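/- Suppose U : dom → ℝ≥0 is a function along a hybrid solution such that on flows d/dt U(t,j) ≤ −μ·U(t,j) + c (for constants μ > 0, c ≥ 0) and at jumps U(t, j+1) ≤ U(t, j). Then for all (t,j) in the hybrid time domain, U(t,j) ≤ e^{−μ t}·U(0,0) + c/μ. -/

import Mathlib

open Set

/-- Core Gronwall-type lemma on a single interval. -/
lemma gronwall_interval (μ c : ℝ) (hμ : 0 < μ) (a b : ℝ) (g g' : ℝ → ℝ)
    (hg : ∀ s ∈ Icc a b, HasDerivWithinAt g (g' s) (Icc a b) s)
    (hd : ∀ s ∈ Icc a b, g' s ≤ -μ * g s + c) :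
    ∀ s ∈ Icc a b, g s ≤ Real.exp (-μ * (s - a)) * g a
      + (c / μ) * (1 - Real.exp (-μ * (s - a))) := by
  intro s hs
  set h : ℝ → ℝ := fun u => Real.exp (μ * u) * (g u - c / μ) with hh
  have hanti : AntitoneOn h (Icc a b) := by
    apply antitoneOn_of_hasDerivWithinAt_nonpos (convex_Icc a b)
      (f' := fun u => Real.exp (μ * u) * (μ * (g u - c / μ) + g' u))
    · intro u hu
      have hlin : HasDerivAt (fun x : ℝ => μ * x) μ u := by
        simpa using (hasDerivAt_id u).const_mul μ
      exact hlin.exp.continuousAt.continuousWithinAt.mul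
        (((hg u hu).sub_const _).continuousWithinAt)
    · intro u hu
      have hu' : u ∈ Icc a b := interior_subset hu
      have hlin : HasDerivAt (fun x : ℝ => μ * x) μ u := by
        simpa using (hasDerivAt_id u).const_mul μ
      have h1 : HasDerivWithinAt (fun x => Real.exp (μ * x)) (Real.exp (μ * u) * μ) (interior (Icc a b)) u :=
        hlin.exp.hasDerivWithinAt
      have h2 : HasDerivWithinAt (fun x => g x - c / μ) (g' u) (interior (Icc a b)) u :=
        ((hg u hu').sub_const _).mono interior_subset
      have := h1.fun_mul h2
      exact this.congr_deriv (by ring)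
    · intro u hu
      have hu' : u ∈ Icc a b := interior_subset hu
      have := hd u hu'
      have hexp : 0 < Real.exp (μ * u) := Real.exp_pos _
      have : μ * (g u - c / μ) + g' u ≤ 0 := by
        have hcancel : μ * (c / μ) = c := by field_simp
        nlinarith [hd u hu']
      nlinarith
  have ha : a ∈ Icc a b := ⟨le_refl a, hs.1.trans hs.2⟩
  have hle := hanti ha hs hs.1
  simp only [hh] at hle
  -- hle : exp(μ s)(g s - c/μ) ≤ exp(μ a)(g a - c/μ)
  have hexp : 0 < Real.exp (μ * s) := Real.exp_pos _
  have key : g s - c / μ ≤ Real.exp (-μ * (s - a)) * (g a - c / μ) := by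
    have h2 := mul_le_mul_of_nonneg_left hle (le_of_lt (Real.exp_pos (-(μ * s))))
    rw [← mul_assoc, ← mul_assoc, ← Real.exp_add, ← Real.exp_add] at h2
    simp only [neg_add_cancel, Real.exp_zero, one_mul] at h2
    have heq : Real.exp (-(μ * s) + μ * a) = Real.exp (-μ * (s - a)) := by ring_nf
    rw [heq] at h2
    exact h2
  have hexpand : Real.exp (-μ * (s - a)) * (g a - c / μ)
      = Real.exp (-μ * (s - a)) * g a - Real.exp (-μ * (s - a)) * (c / μ) := by ring
  linarith

/-- Hybrid Lyapunov comparison: if U decreases as dU/dt ≤ −μU + c on flows and does not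
increase at jumps, then U(t,j) ≤ e^{−μt}·U(0,0) + c/μ on the whole hybrid time domain.
The hybrid time domain is described by the nondecreasing sequence of jump times (t j),
with t 0 = 0, the j-th flow interval being [t j, t (j+1)]. -/
theorem hybrid_lyapunov_decrease
    (μ c : ℝ) (hμ : 0 < μ) (hc : 0 ≤ c)
    (t : ℕ → ℝ) (ht0 : t 0 = 0) (htmono : Monotone t)
    (U : ℝ × ℕ → ℝ) (hUnn : ∀ j, ∀ s ∈ Icc (t j) (t (j + 1)), 0 ≤ U (s, j))
    (D : ℕ → ℝ → ℝ)
    -- flow condition: dU/dt = D j s ≤ −μ·U + c on each flow interval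
    (hflow : ∀ j, ∀ s ∈ Icc (t j) (t (j + 1)),
      HasDerivWithinAt (fun u => U (u, j)) (D j s) (Icc (t j) (t (j + 1))) s)
    (hD : ∀ j, ∀ s ∈ Icc (t j) (t (j + 1)), D j s ≤ -μ * U (s, j) + c)
    -- jump condition: U does not increase at jumps
    (hjump : ∀ j, U (t (j + 1), j + 1) ≤ U (t (j + 1), j)) :
    ∀ j, ∀ s ∈ Icc (t j) (t (j + 1)),
      U (s, j) ≤ Real.exp (-μ * s) * U (0, 0) + c / μ := by
  -- strengthened invariant
  have main : ∀ j, ∀ s ∈ Icc (t j) (t (j + 1)),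
      U (s, j) ≤ Real.exp (-μ * s) * U (0, 0)
        + (c / μ) * (1 - Real.exp (-μ * s)) := by
    intro j
    induction j with
    | zero =>
      intro s hs
      have := gronwall_interval μ c hμ (t 0) (t 1) (fun u => U (u, 0)) (D 0)
        (hflow 0) (hD 0) s hs
      rw [ht0] at this
      simpa using this
    | succ n ih =>
      intro s hs
      have hend : t (n + 1) ∈ Icc (t n) (t (n + 1)) :=
        ⟨htmono (Nat.le_succ n), le_refl _⟩
      have hAend : U (t (n + 1), n + 1) ≤ Real.exp (-μ * t (n + 1)) * U (0, 0)
          + (c / μ) * (1 - Real.exp (-μ * t (n + 1))) :=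
        (hjump n).trans (ih _ hend)
      have hgr := gronwall_interval μ c hμ (t (n + 1)) (t (n + 2))
        (fun u => U (u, n + 1)) (D (n + 1)) (hflow (n + 1)) (hD (n + 1)) s hs
      have hE : Real.exp (-μ * (s - t (n + 1))) * (Real.exp (-μ * t (n + 1)) * U (0, 0))
          = Real.exp (-μ * s) * U (0, 0) := by
        rw [← mul_assoc, ← Real.exp_add]; ring_nf
      calc U (s, n + 1)
          ≤ Real.exp (-μ * (s - t (n + 1))) * U (t (n + 1), n + 1)
            + (c / μ) * (1 - Real.exp (-μ * (s - t (n + 1)))) := hgr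
        _ ≤ Real.exp (-μ * (s - t (n + 1))) * (Real.exp (-μ * t (n + 1)) * U (0, 0)
            + (c / μ) * (1 - Real.exp (-μ * t (n + 1))))
            + (c / μ) * (1 - Real.exp (-μ * (s - t (n + 1)))) := by
            exact add_le_add_left (mul_le_mul_of_nonneg_left hAend (Real.exp_pos _).le) _
        _ = Real.exp (-μ * s) * U (0, 0) + (c / μ) * (1 - Real.exp (-μ * s)) := by
            have hE2 : Real.exp (-μ * (s - t (n + 1))) * Real.exp (-μ * t (n + 1))
                = Real.exp (-μ * s) := by rw [← Real.exp_add]; ring_nf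
            rw [mul_add, hE]
            linear_combination (-(c / μ)) * hE2
  intro j s hs
  have h1 := main j s hs
  have hs0 : 0 ≤ s := by
    have : t 0 ≤ t j := htmono (Nat.zero_le j)
    rw [ht0] at this
    linarith [hs.1]
  have hexp1 : Real.exp (-μ * s) ≤ 1 := by
    apply Real.exp_le_one_iff.mpr
    nlinarith
  have hcd : 0 ≤ c / μ := div_nonneg hc hμ.le
  nlinarith [Real.exp_pos (-μ * s)]
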